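/- arXiv:1712.07553 — 2 statements merged into one kernel-verified Lean document; each statement's English description precedes it below -/
import Mathlib

section
/- Let f : ℝ → ℝ be a positive, nonincreasing, continuous function, let z > 0, and let S : [0,∞) → [0,∞) be a right-continuous nondecreasing function with S(0) = 0. Then the integral equation Y_t = z − S_t + ∫_0^t f(Y_s) ds, t ≥ 0, has exactly one right-continuous solution Y : [0,∞) → ℝ. -/
open MeasureTheory Filter Set Topology intervalIntegral

namespace IntEqAux

/-- One step of the delayed Picard iteration. -/
noncomputable def Phi (f : ℝ → ℝ) (z : ℝ) (Sb : ℝ → ℝ) (ε : ℝ) (V : ℝ → ℝ) : ℝ → ℝ :=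
  fun t => ∫ s in (0:ℝ)..(max t 0), f (z - Sb (max (s - ε) 0) + V (max (s - ε) 0))

variable {f : ℝ → ℝ} {z : ℝ} {Sb : ℝ → ℝ} {ε : ℝ} {V : ℝ → ℝ}

lemma integrand_meas (hfcont : Continuous f) (hSb : Monotone Sb) (hV : Measurable V) :
    Measurable fun s => f (z - Sb (max (s - ε) 0) + V (max (s - ε) 0)) := by
  have hθ : Measurable fun s : ℝ => max (s - ε) 0 :=
    (measurable_id.sub_const ε).max measurable_const
  exact hfcont.measurable.comp
    ((measurable_const.sub (hSb.measurable.comp hθ)).add (hV.comp hθ))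

lemma integrand_le (hfanti : Antitone f) (hSb : Monotone Sb) (hVpos : ∀ s, 0 ≤ V s)
    {s c : ℝ} (h : max (s - ε) 0 ≤ c) :
    f (z - Sb (max (s - ε) 0) + V (max (s - ε) 0)) ≤ f (z - Sb c) := by
  have h1 : Sb (max (s - ε) 0) ≤ Sb c := hSb h
  have h2 : 0 ≤ V (max (s - ε) 0) := hVpos _
  exact hfanti (by linarith)

lemma integrand_intIntegrable (hfpos : ∀ y, 0 < f y) (hfanti : Antitone f)
    (hfcont : Continuous f) (hSb : Monotone Sb)
    (hε : 0 ≤ ε) (hV : Measurable V) (hVpos : ∀ s, 0 ≤ V s) (a b : ℝ) :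
    IntervalIntegrable (fun s => f (z - Sb (max (s - ε) 0) + V (max (s - ε) 0)))
      volume a b := by
  refine (intervalIntegrable_const (c := f (z - Sb (max (max a b) 0)))).mono_fun
    ((integrand_meas hfcont hSb hV).aestronglyMeasurable) ?_
  refine (ae_restrict_iff' measurableSet_uIoc).2 (ae_of_all _ fun s hs => ?_)
  have hs2 : s ≤ max a b := hs.2
  have hθ : max (s - ε) 0 ≤ max (max a b) 0 :=
    max_le_max (by linarith) le_rfl
  have hb := integrand_le (z := z) hfanti hSb hVpos hθ
  have h0 := hfpos (z - Sb (max (s - ε) 0) + V (max (s - ε) 0))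
  simp only [Real.norm_eq_abs, abs_of_pos h0, abs_of_pos (hfpos _)]
  exact hb

lemma Phi_nonneg (hfpos : ∀ y, 0 < f y) (t : ℝ) : 0 ≤ Phi f z Sb ε V t :=
  intervalIntegral.integral_nonneg (le_max_right t 0) (fun u _ => (hfpos _).le)

lemma Phi_continuous (hfpos : ∀ y, 0 < f y) (hfanti : Antitone f)
    (hfcont : Continuous f) (hSb : Monotone Sb) (hε : 0 ≤ ε)
    (hV : Measurable V) (hVpos : ∀ s, 0 ≤ V s) :
    Continuous (Phi f z Sb ε V) := by
  have h := intervalIntegral.continuous_primitive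
    (fun a b => integrand_intIntegrable (z := z) hfpos hfanti hfcont hSb hε hV hVpos a b) 0
  exact h.comp (continuous_id.max continuous_const)

/-- values of `Phi V` on `[0, a+ε]` only depend on values of `V` on `[0,a]`. -/
lemma Phi_congr {W : ℝ → ℝ} {a : ℝ} (ha : 0 ≤ a) (hε : 0 ≤ ε)
    (h : ∀ x, 0 ≤ x → x ≤ a → V x = W x) {t : ℝ} (ht : t ≤ a + ε) :
    Phi f z Sb ε V t = Phi f z Sb ε W t := by
  unfold Phi
  refine intervalIntegral.integral_congr fun s hs => ?_
  rw [uIcc_of_le (le_max_right t 0)] at hs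
  have hsle : s ≤ a + ε := hs.2.trans (max_le ht (by linarith))
  have h1 : 0 ≤ max (s - ε) 0 := le_max_right _ _
  have h2 : max (s - ε) 0 ≤ a := max_le (by linarith) ha
  rw [h _ h1 h2]

lemma iter_good (hfpos : ∀ y, 0 < f y) (hfanti : Antitone f)
    (hfcont : Continuous f) (hSb : Monotone Sb) (hε : 0 ≤ ε) (k : ℕ) :
    Measurable ((Phi f z Sb ε)^[k] (fun _ => (0:ℝ))) ∧
      ∀ s, 0 ≤ (Phi f z Sb ε)^[k] (fun _ => (0:ℝ)) s := by
  induction k with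
  | zero => exact ⟨measurable_const, fun s => le_rfl⟩
  | succ k ih =>
    rw [Function.iterate_succ_apply']
    exact ⟨(Phi_continuous hfpos hfanti hfcont hSb hε ih.1 ih.2).measurable,
      fun s => Phi_nonneg hfpos s⟩

lemma iter_stab (hε : 0 ≤ ε) (k : ℕ) {t : ℝ} (ht : t ≤ k * ε) :
    (Phi f z Sb ε)^[k] (fun _ => (0:ℝ)) t = (Phi f z Sb ε)^[k+1] (fun _ => (0:ℝ)) t := by
  induction k generalizing t with
  | zero =>
    simp only [Nat.cast_zero, zero_mul] at ht
    simp only [Function.iterate_zero_apply, Function.iterate_one]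
    show 0 = Phi f z Sb ε (fun _ => (0:ℝ)) t
    unfold Phi
    rw [max_eq_right ht, intervalIntegral.integral_same]
  | succ k ih =>
    rw [Function.iterate_succ_apply', Function.iterate_succ_apply' (n := k+1)]
    refine Phi_congr (by positivity) hε (fun x hx hxa => ih hxa) ?_
    push_cast at ht ⊢
    linarith

theorem exists_U {f : ℝ → ℝ} {z : ℝ} {Sb : ℝ → ℝ}
    (hfpos : ∀ y, 0 < f y) (hfanti : Antitone f) (hfcont : Continuous f)
    (hSb : Monotone Sb) {T : ℝ} (hT : 0 < T) :
    ∃ U : ℝ → ℝ, Continuous U ∧ (∀ s, 0 ≤ U s) ∧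
      ∀ t ∈ Icc (0:ℝ) T, U t = ∫ s in (0:ℝ)..t, f (z - Sb s + U s) := by
  set M := f (z - Sb T) with hMdef
  have hM : 0 < M := hfpos _
  set Z : ℝ → ℝ := fun _ => 0 with hZ
  set εn : ℕ → ℝ := fun n => 1 / (n + 1) with hεn
  have hεpos : ∀ n, 0 < εn n := fun n => by positivity
  set Un : ℕ → ℝ → ℝ := fun n => (Phi f z Sb (εn n))^[(n+1) * (⌈T⌉₊ + 1)] Z with hUndef
  have hgood : ∀ n, Measurable (Un n) ∧ ∀ s, 0 ≤ Un n s := fun n =>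
    iter_good hfpos hfanti hfcont hSb (hεpos n).le _
  have hUnEq : ∀ n, ∀ t ≤ T, Un n t = Phi f z Sb (εn n) (Un n) t := by
    intro n t ht
    have hKε : T ≤ (((n+1) * (⌈T⌉₊ + 1) : ℕ) : ℝ) * εn n := by
      have h1 : (T:ℝ) ≤ (⌈T⌉₊ : ℝ) + 1 := le_trans (Nat.le_ceil T) (by linarith)
      have h2 : (((n+1) * (⌈T⌉₊ + 1) : ℕ) : ℝ) * εn n = (⌈T⌉₊ : ℝ) + 1 := by
        simp only [hεn]
        push_cast
        field_simp
      rw [h2]; exact h1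
    have hst := iter_stab (f := f) (z := z) (Sb := Sb) (hεpos n).le
      ((n+1) * (⌈T⌉₊ + 1)) (t := t) (ht.trans hKε)
    calc Un n t = (Phi f z Sb (εn n))^[(n+1) * (⌈T⌉₊ + 1) + 1] Z t := hst
      _ = Phi f z Sb (εn n) (Un n) t := by rw [Function.iterate_succ_apply']
  have hUnInt : ∀ n, ∀ t ∈ Icc (0:ℝ) T, Un n t =
      ∫ s in (0:ℝ)..t, f (z - Sb (max (s - εn n) 0) + Un n (max (s - εn n) 0)) := by
    intro n t ht
    rw [hUnEq n t ht.2]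
    unfold Phi
    rw [max_eq_left ht.1]
  have hIntn : ∀ n a b, IntervalIntegrable
      (fun s => f (z - Sb (max (s - εn n) 0) + Un n (max (s - εn n) 0))) volume a b :=
    fun n a b => integrand_intIntegrable (z := z) hfpos hfanti hfcont hSb (hεpos n).le
      (hgood n).1 (hgood n).2 a b
  have hUnLip : ∀ n, ∀ x ∈ Icc (0:ℝ) T, ∀ y ∈ Icc (0:ℝ) T,
      |Un n x - Un n y| ≤ M * |x - y| := by
    intro n x hx y hy
    rw [hUnInt n x hx, hUnInt n y hy,
      intervalIntegral.integral_interval_sub_left (hIntn n 0 x) (hIntn n 0 y)]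
    have hb := intervalIntegral.norm_integral_le_of_norm_le_const (C := M) (a := y) (b := x)
      (f := fun s => f (z - Sb (max (s - εn n) 0) + Un n (max (s - εn n) 0))) ?_
    · rwa [Real.norm_eq_abs] at hb
    · intro s hs
      have hs1 : s ≤ max y x := hs.2
      have hsT : s ≤ T := hs1.trans (max_le hy.2 hx.2)
      have hθ : max (s - εn n) 0 ≤ T := max_le (by linarith [hεpos n]) hT.le
      rw [Real.norm_eq_abs, abs_of_pos (hfpos _)]
      exact integrand_le hfanti hSb (hgood n).2 hθ
  have hUn0 : ∀ n, Un n 0 = 0 := by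
    intro n
    rw [hUnInt n 0 ⟨le_rfl, hT.le⟩, intervalIntegral.integral_same]
  have hUnBdd : ∀ n, ∀ x ∈ Icc (0:ℝ) T, Un n x ∈ Icc 0 (M * T) := by
    intro n x hx
    refine ⟨(hgood n).2 x, ?_⟩
    have h1 := hUnLip n x hx 0 ⟨le_rfl, hT.le⟩
    rw [hUn0 n, sub_zero, sub_zero, abs_of_nonneg hx.1] at h1
    have h2 : M * x ≤ M * T := mul_le_mul_of_nonneg_left hx.2 hM.le
    exact le_trans (le_abs_self _) (h1.trans h2)
  -- compactness: extract a subsequence converging at all rationals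
  haveI : CompactSpace (Icc (0:ℝ) (M * T)) := isCompact_iff_compactSpace.mp isCompact_Icc
  have hA : (0:ℝ) ≤ M * T := by positivity
  set seq : ℕ → (ℚ → Icc (0:ℝ) (M * T)) := fun n q =>
    ⟨min (M * T) (max 0 (Un n (q:ℝ))), ⟨le_min hA (le_max_left 0 _), min_le_left _ _⟩⟩
    with hseqdef
  obtain ⟨L, φ, hφ, hLconv⟩ := CompactSpace.tendsto_subseq seq
  have hrat : ∀ q : ℚ, (q:ℝ) ∈ Icc (0:ℝ) T →
      Tendsto (fun k => Un (φ k) (q:ℝ)) atTop (𝓝 (L q).1) := by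
    intro q hq
    have h1 : Tendsto (fun k => (seq (φ k) q).1) atTop (𝓝 (L q).1) :=
      (continuous_subtype_val.tendsto _).comp ((tendsto_pi_nhds.1 hLconv) q)
    refine h1.congr fun k => ?_
    have hb := hUnBdd (φ k) (q:ℝ) hq
    simp only [hseqdef, max_eq_right hb.1, min_eq_right hb.2]
  have hratnear : ∀ x ∈ Icc (0:ℝ) T, ∀ δ : ℝ, 0 < δ →
      ∃ q : ℚ, (q:ℝ) ∈ Icc (0:ℝ) T ∧ |x - (q:ℝ)| < δ := by
    intro x hx δ hδ
    rcases eq_or_lt_of_le hx.1 with h0 | h0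
    · exact ⟨0, ⟨by simp, by simpa using hT.le⟩, by rw [← h0]; simpa using hδ⟩
    · obtain ⟨q, hq1, hq2⟩ := exists_rat_btwn (show max 0 (x - δ) < x from
        max_lt h0 (by linarith))
      have hq0 : (0:ℝ) ≤ (q:ℝ) := ((le_max_left 0 (x - δ)).trans_lt hq1).le
      have hqδ : x - δ < (q:ℝ) := (le_max_right 0 (x - δ)).trans_lt hq1
      exact ⟨q, ⟨hq0, hq2.le.trans hx.2⟩, by rw [abs_of_pos (by linarith)]; linarith⟩
  have hVcauchy : ∀ x ∈ Icc (0:ℝ) T, CauchySeq (fun k => Un (φ k) x) := by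
    intro x hx
    rw [Metric.cauchySeq_iff]
    intro δ hδ
    obtain ⟨q, hq, hqx⟩ := hratnear x hx (δ / (4 * (M + 1))) (by positivity)
    have hc : CauchySeq (fun k => Un (φ k) (q:ℝ)) := (hrat q hq).cauchySeq
    rw [Metric.cauchySeq_iff] at hc
    obtain ⟨N, hN⟩ := hc (δ/2) (by linarith)
    refine ⟨N, fun m hm k hk => ?_⟩
    have h1 := hUnLip (φ m) x hx (q:ℝ) hq
    have h2 := hUnLip (φ k) x hx (q:ℝ) hq
    have h3 := hN m hm k hk
    rw [Real.dist_eq] at h3 ⊢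
    have hMq : M * |x - (q:ℝ)| < δ / 4 := by
      have ha : M * |x - (q:ℝ)| ≤ (M + 1) * |x - (q:ℝ)| :=
        mul_le_mul_of_nonneg_right (by linarith) (abs_nonneg _)
      have hb : (M + 1) * |x - (q:ℝ)| < (M + 1) * (δ / (4 * (M + 1))) :=
        mul_lt_mul_of_pos_left hqx (by linarith)
      have hcc : (M + 1) * (δ / (4 * (M + 1))) = δ / 4 := by field_simp
      linarith
    calc |Un (φ m) x - Un (φ k) x|
        ≤ |Un (φ m) x - Un (φ m) (q:ℝ)| + |Un (φ m) (q:ℝ) - Un (φ k) x| :=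
          abs_sub_le _ _ _
      _ ≤ |Un (φ m) x - Un (φ m) (q:ℝ)| + (|Un (φ m) (q:ℝ) - Un (φ k) (q:ℝ)| +
          |Un (φ k) (q:ℝ) - Un (φ k) x|) := by linarith [abs_sub_le (Un (φ m) (q:ℝ)) (Un (φ k) (q:ℝ)) (Un (φ k) x)]
      _ < δ := by
          rw [abs_sub_comm (Un (φ k) (q:ℝ))] at *
          linarith [h1, h2, h3, hMq]
  set c : ℝ → ℝ := fun x => max 0 (min x T) with hcdef
  have hc_mem : ∀ x, c x ∈ Icc (0:ℝ) T := fun x =>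
    ⟨le_max_left _ _, max_le hT.le (min_le_right x T)⟩
  have hc_id : ∀ x ∈ Icc (0:ℝ) T, c x = x := fun x hx => by
    simp only [hcdef]; rw [min_eq_left hx.2, max_eq_right hx.1]
  set U : ℝ → ℝ := fun x => limUnder atTop (fun k => Un (φ k) (c x)) with hUdef
  have hUtendc : ∀ x, Tendsto (fun k => Un (φ k) (c x)) atTop (𝓝 (U x)) := by
    intro x
    obtain ⟨a, ha⟩ := cauchySeq_tendsto_of_complete (hVcauchy (c x) (hc_mem x))
    rw [show U x = a from ha.limUnder_eq]
    exact ha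
  have hUtend : ∀ x ∈ Icc (0:ℝ) T, Tendsto (fun k => Un (φ k) x) atTop (𝓝 (U x)) := by
    intro x hx
    have h := hUtendc x
    rwa [hc_id x hx] at h
  have hUc : ∀ x, U x = U (c x) := by
    intro x
    show limUnder atTop (fun k => Un (φ k) (c x)) = limUnder atTop (fun k => Un (φ k) (c (c x)))
    rw [hc_id (c x) (hc_mem x)]
  have hUnonneg : ∀ s, 0 ≤ U s := fun s =>
    ge_of_tendsto (hUtendc s) (Eventually.of_forall fun k => (hgood (φ k)).2 _)
  have hUlip : ∀ x ∈ Icc (0:ℝ) T, ∀ y ∈ Icc (0:ℝ) T, |U x - U y| ≤ M * |x - y| := by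
    intro x hx y hy
    have h := ((hUtend x hx).sub (hUtend y hy)).abs
    exact le_of_tendsto h (Eventually.of_forall fun k => hUnLip (φ k) x hx y hy)
  have hUcontOn : ContinuousOn U (Icc (0:ℝ) T) := by
    refine LipschitzOnWith.continuousOn (K := Real.toNNReal M) ?_
    refine LipschitzOnWith.of_dist_le_mul fun x hx y hy => ?_
    rw [Real.dist_eq, Real.dist_eq, Real.coe_toNNReal M hM.le]
    exact hUlip x hx y hy
  have hUcont : Continuous U := by
    have hcc : Continuous c := continuous_const.max (continuous_id.min continuous_const)
    have h := hUcontOn.comp_continuous hcc (fun x => hc_mem x)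
    exact h.congr fun x => (hUc x).symm
  have hεφ : Tendsto (fun k => εn (φ k)) atTop (𝓝 0) := by
    refine squeeze_zero (fun k => (hεpos _).le) (fun k => ?_)
      tendsto_one_div_add_atTop_nhds_zero_nat
    simp only [hεn]
    have h1 : ((k:ℝ) + 1) ≤ ((φ k : ℝ) + 1) := by
      have : (k:ℝ) ≤ (φ k : ℝ) := Nat.cast_le.2 hφ.le_apply
      linarith
    exact one_div_le_one_div_of_le (by positivity) h1
  refine ⟨U, hUcont, hUnonneg, ?_⟩
  intro t ht
  have hNcnt : {x : ℝ | ¬ContinuousAt Sb x}.Countable := hSb.countable_not_continuousAt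
  have hN0 : volume {x : ℝ | ¬ContinuousAt Sb x} = 0 := hNcnt.measure_zero _
  have key := intervalIntegral.tendsto_integral_filter_of_dominated_convergence
    (μ := volume) (a := (0:ℝ)) (b := t)
    (F := fun k s => f (z - Sb (max (s - εn (φ k)) 0) + Un (φ k) (max (s - εn (φ k)) 0)))
    (f := fun s => f (z - Sb s + U s)) (l := atTop) (bound := fun _ => M)
    (Eventually.of_forall fun k =>
      (integrand_meas hfcont hSb (hgood (φ k)).1).aestronglyMeasurable)
    ?_ intervalIntegrable_const ?_
  · have h2 : Tendsto (fun k => Un (φ k) t) atTop (𝓝 (U t)) := hUtend t ht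
    have h3 : (fun k => Un (φ k) t) = fun k => ∫ s in (0:ℝ)..t,
        f (z - Sb (max (s - εn (φ k)) 0) + Un (φ k) (max (s - εn (φ k)) 0)) :=
      funext fun k => hUnInt (φ k) t ht
    rw [h3] at h2
    exact tendsto_nhds_unique h2 key
  · refine Eventually.of_forall fun k => ae_of_all _ fun s hs => ?_
    rw [uIoc_of_le ht.1] at hs
    have hθ : max (s - εn (φ k)) 0 ≤ T :=
      max_le (by linarith [hεpos (φ k), hs.2, ht.2]) hT.le
    rw [Real.norm_eq_abs, abs_of_pos (hfpos _)]
    exact integrand_le hfanti hSb (hgood (φ k)).2 hθ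
  · have hae : ∀ᵐ s : ℝ ∂volume, ContinuousAt Sb s := by
      rw [ae_iff]
      simpa using hN0
    filter_upwards [hae] with s hscont hsΙ
    rw [uIoc_of_le ht.1] at hsΙ
    have hsmem : s ∈ Icc (0:ℝ) T := ⟨hsΙ.1.le, hsΙ.2.trans ht.2⟩
    have hθmem : ∀ k, max (s - εn (φ k)) 0 ∈ Icc (0:ℝ) T := fun k =>
      ⟨le_max_right _ _, max_le (by linarith [hεpos (φ k), hsmem.2]) hT.le⟩
    have hθtend : Tendsto (fun k => max (s - εn (φ k)) 0) atTop (𝓝 s) := by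
      have h1 : Tendsto (fun k => s - εn (φ k)) atTop (𝓝 s) := by
        simpa using (tendsto_const_nhds (x := s) (f := atTop)).sub hεφ
      have h2 : Tendsto (fun k => max (s - εn (φ k)) 0) atTop (𝓝 (max s 0)) :=
        h1.max tendsto_const_nhds
      rwa [max_eq_left hsΙ.1.le] at h2
    have hSbt : Tendsto (fun k => Sb (max (s - εn (φ k)) 0)) atTop (𝓝 (Sb s)) :=
      hscont.tendsto.comp hθtend
    have hUt : Tendsto (fun k => Un (φ k) (max (s - εn (φ k)) 0)) atTop (𝓝 (U s)) := by
      rw [tendsto_iff_dist_tendsto_zero]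
      have hd : ∀ k, dist (Un (φ k) (max (s - εn (φ k)) 0)) (U s) ≤
          M * εn (φ k) + dist (Un (φ k) s) (U s) := by
        intro k
        have h1 := hUnLip (φ k) _ (hθmem k) s hsmem
        have habs : |max (s - εn (φ k)) 0 - s| ≤ εn (φ k) := by
          rw [abs_le]
          constructor
          · have := le_max_left (s - εn (φ k)) 0
            linarith
          · have h2 : max (s - εn (φ k)) 0 ≤ s :=
              max_le (by linarith [hεpos (φ k)]) hsΙ.1.le
            linarith [hεpos (φ k)]
        have h2 : |Un (φ k) (max (s - εn (φ k)) 0) - Un (φ k) s| ≤ M * εn (φ k) :=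
          le_trans h1 (mul_le_mul_of_nonneg_left habs hM.le)
        calc dist (Un (φ k) (max (s - εn (φ k)) 0)) (U s)
            ≤ dist (Un (φ k) (max (s - εn (φ k)) 0)) (Un (φ k) s) +
              dist (Un (φ k) s) (U s) := dist_triangle _ _ _
          _ ≤ M * εn (φ k) + dist (Un (φ k) s) (U s) := by
              rw [Real.dist_eq]; linarith [h2]
      refine squeeze_zero (fun k => dist_nonneg) hd ?_
      have hb1 : Tendsto (fun k => M * εn (φ k)) atTop (𝓝 0) := by
        simpa using hεφ.const_mul M
      have hb2 : Tendsto (fun k => dist (Un (φ k) s) (U s)) atTop (𝓝 0) :=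
        tendsto_iff_dist_tendsto_zero.mp (hUtend s hsmem)
      simpa using hb1.add hb2
    exact (hfcont.tendsto _).comp ((tendsto_const_nhds.sub hSbt).add hUt)

def SolOn (f S : ℝ → ℝ) (z T : ℝ) (Y : ℝ → ℝ) : Prop :=
  (∀ t ∈ Icc (0:ℝ) T, ContinuousWithinAt Y (Ici t) t) ∧
  (∀ t ∈ Icc (0:ℝ) T, IntervalIntegrable (fun s => f (Y s)) volume 0 t) ∧
  (∀ t ∈ Icc (0:ℝ) T, Y t = z - S t + ∫ s in (0:ℝ)..t, f (Y s))

theorem solOn_half {f S : ℝ → ℝ} {z T : ℝ} (hfanti : Antitone f) (hT : 0 ≤ T)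
    {W₁ W₂ : ℝ → ℝ} (h₁ : SolOn f S z T W₁) (h₂ : SolOn f S z T W₂) :
    ∀ t ∈ Icc (0:ℝ) T, W₁ t ≤ W₂ t := by
  intro t ht
  by_contra hcon
  push_neg at hcon
  have hint₁ := h₁.2.1
  have hint₂ := h₂.2.1
  set D : ℝ → ℝ := fun x => (∫ s in (0:ℝ)..x, f (W₁ s)) - ∫ s in (0:ℝ)..x, f (W₂ s)
    with hDdef
  have hDval : ∀ x ∈ Icc (0:ℝ) T, W₁ x - W₂ x = D x := by
    intro x hx
    simp only [hDdef]
    rw [h₁.2.2 x hx, h₂.2.2 x hx]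
    ring
  have hDcont : ContinuousOn D (Icc (0:ℝ) T) := by
    have k₁ : IntegrableOn (fun s => f (W₁ s)) (uIcc (0:ℝ) T) volume := by
      rw [uIcc_of_le hT, ← intervalIntegrable_iff_integrableOn_Icc_of_le hT]
      exact hint₁ T (right_mem_Icc.2 hT)
    have k₂ : IntegrableOn (fun s => f (W₂ s)) (uIcc (0:ℝ) T) volume := by
      rw [uIcc_of_le hT, ← intervalIntegrable_iff_integrableOn_Icc_of_le hT]
      exact hint₂ T (right_mem_Icc.2 hT)
    have c₁ := intervalIntegral.continuousOn_primitive_interval k₁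
    have c₂ := intervalIntegral.continuousOn_primitive_interval k₂
    rw [uIcc_of_le hT] at c₁ c₂
    exact c₁.sub c₂
  have hDt : 0 < D t := by
    have h := hDval t ht
    linarith
  set A := {s | s ∈ Icc (0:ℝ) t ∧ D s ≤ 0} with hAdef
  have h0A : (0:ℝ) ∈ A := ⟨⟨le_rfl, ht.1⟩, by simp [hDdef]⟩
  have hbdd : BddAbove A := ⟨t, fun s hs => hs.1.2⟩
  have hsub : Icc (0:ℝ) t ⊆ Icc 0 T := Icc_subset_Icc le_rfl ht.2
  have hAclosed : IsClosed A := by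
    have h := (hDcont.mono hsub).preimage_isClosed_of_isClosed isClosed_Icc
      (isClosed_Iic (a := (0:ℝ)))
    have : A = Icc (0:ℝ) t ∩ D ⁻¹' (Iic 0) := by
      ext x
      simp [hAdef, mem_setOf_eq, and_comm]
    rwa [this]
  set τ := sSup A with hτdef
  have hτA : τ ∈ A := hAclosed.csSup_mem ⟨0, h0A⟩ hbdd
  have hτmem : τ ∈ Icc (0:ℝ) t := hτA.1
  have hτle : D τ ≤ 0 := hτA.2
  have hτt : τ < t := lt_of_le_of_ne hτmem.2 (fun h => by rw [h] at hτle; linarith)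
  have hpos : ∀ s, τ < s → s ≤ t → 0 < D s := by
    intro s hτs hst
    by_contra hns
    push_neg at hns
    have hsA : s ∈ A := ⟨⟨hτmem.1.trans hτs.le, hst⟩, hns⟩
    exact absurd (le_csSup hbdd hsA) (not_le.2 hτs)
  have hτ0 : D τ = 0 := by
    refine le_antisymm hτle ?_
    have hIocsub : Ioc τ t ⊆ Icc (0:ℝ) T := fun x hx =>
      ⟨hτmem.1.trans hx.1.le, hx.2.trans ht.2⟩
    have htd : Tendsto D (𝓝[Ioc τ t] τ) (𝓝 (D τ)) :=
      ((hDcont τ (hsub hτmem)).mono hIocsub).tendsto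
    rw [nhdsWithin_Ioc_eq_nhdsGT hτt] at htd
    have hev : ∀ᶠ s in 𝓝[>] τ, 0 ≤ D s := by
      have hmem : Ioc τ t ∈ 𝓝[>] τ := Ioc_mem_nhdsGT hτt
      filter_upwards [hmem] with s hs
      exact (hpos s hs.1 hs.2).le
    exact ge_of_tendsto htd hev
  have hW₁₂ : ∀ s ∈ Icc τ t, f (W₁ s) - f (W₂ s) ≤ (0:ℝ) := by
    intro s hs
    have hsmem : s ∈ Icc (0:ℝ) T := ⟨hτmem.1.trans hs.1, hs.2.trans ht.2⟩
    have h := hDval s hsmem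
    rcases eq_or_lt_of_le hs.1 with he | hlt
    · rw [← he] at h
      rw [← he]
      have : W₁ τ = W₂ τ := by rw [he] at hτ0 h ⊢; linarith
      rw [this]
      simp
    · have hDs : 0 < D s := hpos s hlt hs.2
      have hW : W₂ s ≤ W₁ s := by linarith
      linarith [hfanti hW]
  have j₁ : IntervalIntegrable (fun s => f (W₁ s)) volume τ t :=
    (hint₁ t ht).mono_set (by
      rw [uIcc_of_le hτt.le, uIcc_of_le ht.1]
      exact Icc_subset_Icc hτmem.1 le_rfl)
  have j₂ : IntervalIntegrable (fun s => f (W₂ s)) volume τ t :=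
    (hint₂ t ht).mono_set (by
      rw [uIcc_of_le hτt.le, uIcc_of_le ht.1]
      exact Icc_subset_Icc hτmem.1 le_rfl)
  have hsplit : D t - D τ = ∫ s in τ..t, (f (W₁ s) - f (W₂ s)) := by
    have e₁ := intervalIntegral.integral_interval_sub_left (hint₁ t ht)
      (hint₁ τ (hsub hτmem))
    have e₂ := intervalIntegral.integral_interval_sub_left (hint₂ t ht)
      (hint₂ τ (hsub hτmem))
    rw [intervalIntegral.integral_sub j₁ j₂, ← e₁, ← e₂]
    simp only [hDdef]
    ring
  have hneg : (∫ s in τ..t, (f (W₁ s) - f (W₂ s))) ≤ 0 := by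
    have h := intervalIntegral.integral_mono_on (a := τ) (b := t)
      (f := fun s => f (W₁ s) - f (W₂ s)) (g := fun _ => (0:ℝ)) hτt.le (j₁.sub j₂)
      intervalIntegrable_const hW₁₂
    simpa using h
  rw [hτ0, sub_zero] at hsplit
  linarith [hsplit ▸ hneg]

theorem solOn_unique {f S : ℝ → ℝ} {z T : ℝ} (hfanti : Antitone f) (hT : 0 ≤ T)
    {Y₁ Y₂ : ℝ → ℝ} (h₁ : SolOn f S z T Y₁) (h₂ : SolOn f S z T Y₂) :
    ∀ t ∈ Icc (0:ℝ) T, Y₁ t = Y₂ t := fun t ht =>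
  le_antisymm (solOn_half hfanti hT h₁ h₂ t ht) (solOn_half hfanti hT h₂ h₁ t ht)

theorem solOn_exists {f : ℝ → ℝ} (hfpos : ∀ y, 0 < f y) (hfanti : Antitone f)
    (hfcont : Continuous f) {z : ℝ} {S : ℝ → ℝ}
    (hSmono : MonotoneOn S (Ici (0:ℝ)))
    (hSrc : ∀ t ≥ (0:ℝ), ContinuousWithinAt S (Ici t) t)
    {T : ℝ} (hT : 0 < T) : ∃ Y, SolOn f S z T Y := by
  set Sb : ℝ → ℝ := fun x => S (max x 0) with hSbdef
  have hSb : Monotone Sb := fun a b hab =>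
    hSmono (le_max_right a 0) (le_max_right b 0) (max_le_max hab le_rfl)
  obtain ⟨U, hUcont, hUpos, hUeq⟩ := exists_U (z := z) hfpos hfanti hfcont hSb hT
  refine ⟨fun t => z - Sb t + U t, ?_, ?_, ?_⟩
  · intro t ht
    have hSbeq : ∀ x ∈ Ici t, Sb x = S x := fun x hx => by
      simp only [hSbdef]; rw [max_eq_left (ht.1.trans hx)]
    have hScwa : ContinuousWithinAt Sb (Ici t) t :=
      (hSrc t ht.1).congr hSbeq (hSbeq t (le_refl t))
    exact (continuousWithinAt_const.sub hScwa).add hUcont.continuousWithinAt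
  · intro t ht
    refine (intervalIntegrable_const (c := f (z - Sb T))).mono_fun
      ((hfcont.measurable.comp ((measurable_const.sub hSb.measurable).add
        hUcont.measurable)).aestronglyMeasurable) ?_
    refine (ae_restrict_iff' measurableSet_uIoc).2 (ae_of_all _ fun s hs => ?_)
    rw [uIoc_of_le ht.1] at hs
    have h1 : Sb s ≤ Sb T := hSb (hs.2.trans ht.2)
    have h2 : 0 ≤ U s := hUpos s
    simp only [Real.norm_eq_abs, abs_of_pos (hfpos _)]
    exact hfanti (by linarith)
  · intro t ht
    have h := hUeq t ht
    have hSbt : Sb t = S t := by simp only [hSbdef]; rw [max_eq_left ht.1]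
    show z - Sb t + U t = z - S t + ∫ s in (0:ℝ)..t, f (z - Sb s + U s)
    rw [← hSbt, h]

end IntEqAux


open IntEqAux in
/-- Existence and uniqueness for the drifted integral equation: let `f` be positive,
nonincreasing and continuous, let `z > 0`, and let `S : [0,∞) → [0,∞)` be
right-continuous nondecreasing with `S 0 = 0`.  Then the integral equation
`Y t = z - S t + ∫_0^t f (Y s) ds`, `t ≥ 0`, has exactly one right-continuous solution:
a solution exists, and any two solutions agree on `[0,∞)`. -/
theorem integral_equation_exists_unique
    (f : ℝ → ℝ) (hfpos : ∀ y, 0 < f y) (hfanti : Antitone f) (hfcont : Continuous f)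
    (z : ℝ) (hz : 0 < z)
    (S : ℝ → ℝ) (hS0 : S 0 = 0) (hSnonneg : ∀ t ≥ (0 : ℝ), 0 ≤ S t)
    (hSmono : MonotoneOn S (Ici (0 : ℝ)))
    (hSrc : ∀ t ≥ (0 : ℝ), ContinuousWithinAt S (Ici t) t) :
    (∃ Y : ℝ → ℝ,
      (∀ t ≥ (0 : ℝ), ContinuousWithinAt Y (Ici t) t) ∧
      (∀ t ≥ (0 : ℝ), IntervalIntegrable (fun s => f (Y s)) volume 0 t) ∧
      (∀ t ≥ (0 : ℝ), Y t = z - S t + ∫ s in (0 : ℝ)..t, f (Y s))) ∧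
    (∀ Y₁ Y₂ : ℝ → ℝ,
      ((∀ t ≥ (0 : ℝ), ContinuousWithinAt Y₁ (Ici t) t) ∧
        (∀ t ≥ (0 : ℝ), IntervalIntegrable (fun s => f (Y₁ s)) volume 0 t) ∧
        (∀ t ≥ (0 : ℝ), Y₁ t = z - S t + ∫ s in (0 : ℝ)..t, f (Y₁ s))) →
      ((∀ t ≥ (0 : ℝ), ContinuousWithinAt Y₂ (Ici t) t) ∧
        (∀ t ≥ (0 : ℝ), IntervalIntegrable (fun s => f (Y₂ s)) volume 0 t) ∧
        (∀ t ≥ (0 : ℝ), Y₂ t = z - S t + ∫ s in (0 : ℝ)..t, f (Y₂ s))) →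
      ∀ t ≥ (0 : ℝ), Y₁ t = Y₂ t) := by
  classical
  constructor
  · -- existence
    have hex : ∀ n : ℕ, ∃ Y, SolOn f S z ((n:ℝ) + 1) Y := fun n =>
      solOn_exists hfpos hfanti hfcont hSmono hSrc (by positivity)
    choose Ysol hYsol using hex
    set N : ℝ → ℕ := fun t => ⌈max t 0⌉₊ with hNdef
    set Y : ℝ → ℝ := fun t => Ysol (N t) t with hYdef
    have hNle : ∀ t : ℝ, t ≤ (N t : ℝ) + 1 := by
      intro t
      have h1 : t ≤ max t 0 := le_max_left t 0
      have h2 : max t 0 ≤ (⌈max t 0⌉₊ : ℝ) := Nat.le_ceil _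
      simp only [hNdef]
      linarith
    have hsolmono : ∀ (n : ℕ) (T' : ℝ), T' ≤ (n:ℝ) + 1 → SolOn f S z T' (Ysol n) := by
      intro n T' hT'
      exact ⟨fun t htm => (hYsol n).1 t ⟨htm.1, htm.2.trans hT'⟩,
        fun t htm => (hYsol n).2.1 t ⟨htm.1, htm.2.trans hT'⟩,
        fun t htm => (hYsol n).2.2 t ⟨htm.1, htm.2.trans hT'⟩⟩
    have hconsist : ∀ (n : ℕ) (s : ℝ), 0 ≤ s → s ≤ (n:ℝ) + 1 → Y s = Ysol n s := by
      intro n s hs0 hsn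
      have h1 := hsolmono (N s) s (hNle s)
      have h2 := hsolmono n s hsn
      exact solOn_unique hfanti hs0 h1 h2 s ⟨hs0, le_rfl⟩
    refine ⟨Y, ?_, ?_, ?_⟩
    · intro t ht
      have hlt : t < (N t : ℝ) + 1 := by
        have h1 : t ≤ max t 0 := le_max_left t 0
        have h2 : max t 0 ≤ (⌈max t 0⌉₊ : ℝ) := Nat.le_ceil _
        simp only [hNdef]
        push_cast
        linarith
      have hcwa := (hYsol (N t)).1 t ⟨ht, hlt.le⟩
      refine hcwa.congr_of_eventuallyEq ?_ (hconsist (N t) t ht hlt.le)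
      have hmem : Icc t ((N t : ℝ) + 1) ∈ 𝓝[≥] t := Icc_mem_nhdsGE_of_mem ⟨le_rfl, hlt⟩
      filter_upwards [hmem] with s hs
      exact hconsist (N t) s (ht.trans hs.1) hs.2
    · intro t ht
      have hint := (hYsol (N t)).2.1 t ⟨ht, hNle t⟩
      rw [intervalIntegrable_iff_integrableOn_Ioc_of_le ht] at hint ⊢
      refine hint.congr_fun ?_ measurableSet_Ioc
      intro s hs
      simp only
      rw [hconsist (N t) s hs.1.le (hs.2.trans (hNle t))]
    · intro t ht
      have heq := (hYsol (N t)).2.2 t ⟨ht, hNle t⟩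
      have hYt : Y t = Ysol (N t) t := hconsist _ t ht (hNle t)
      rw [hYt, heq]
      congr 1
      refine intervalIntegral.integral_congr fun s hs => ?_
      rw [uIcc_of_le ht] at hs
      show f (Ysol (N t) s) = f (Y s)
      symm
      rw [hconsist (N t) s hs.1 (hs.2.trans (hNle t))]
  · -- uniqueness
    rintro Y₁ Y₂ ⟨hc₁, hi₁, he₁⟩ ⟨hc₂, hi₂, he₂⟩ t ht
    have h₁ : SolOn f S z t Y₁ :=
      ⟨fun s hs => hc₁ s hs.1, fun s hs => hi₁ s hs.1, fun s hs => he₁ s hs.1⟩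
    have h₂ : SolOn f S z t Y₂ :=
      ⟨fun s hs => hc₂ s hs.1, fun s hs => hi₂ s hs.1, fun s hs => he₂ s hs.1⟩
    exact solOn_unique hfanti ht h₁ h₂ t ⟨ht, le_rfl⟩
end

section
/- For γ ∈ ℝ let Λ_γ be the measure on [0,1] with density (1 + log(1/p))^{−γ} with respect to Lebesgue measure, i.e. Λ_γ(dp) = (1 + log(1/p))^{−γ} dp. Then: (a) μ_γ := ∫_{[0,1]} log(1/(1−p)) p^{−2} Λ_γ(dp) < ∞ and σ²_γ := ∫_{[0,1]} (log(1/(1−p)))² p^{−2} Λ_γ(dp) < ∞ if and only if γ > 1; (b) ∫_{[0,1]} log(1/p) p^{−1} Λ_γ(dp) < ∞ if and only if γ > 2; and (c) √(log(1/r)) · ∫_{[0,r]} p^{−1} Λ_γ(dp) → 0 as r → 0 if and only if γ > 3/2. -/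
open MeasureTheory Filter Set

/-- For `γ ∈ ℝ`, the measure on `[0,1]` with Lebesgue density `(1 + log(1/p))^{-γ}`. -/
noncomputable def LambdaGamma (γ : ℝ) : Measure ℝ :=
  (volume.restrict (Icc (0 : ℝ) 1)).withDensity
    (fun p => ENNReal.ofReal ((1 + Real.log (1 / p)) ^ (-γ)))

open scoped ENNReal

lemma neg_log_le' {u k : ℝ} (hu : 0 < u) (hk : 0 < k) :
    -Real.log u ≤ k * u ^ (-(1/k)) := by
  have h1 := Real.log_le_sub_one_of_pos (Real.rpow_pos_of_pos hu (-(1/k)))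
  rw [Real.log_rpow hu] at h1
  have h2 := mul_le_mul_of_nonneg_left h1 hk.le
  have hk' : k * (-(1/k) * Real.log u) = -Real.log u := by field_simp
  have h3 : 0 < u ^ (-(1/k)) := Real.rpow_pos_of_pos hu _
  nlinarith

namespace LG

lemma hp_mem {t : ℝ} (ht : 1 < t) :
    0 < Real.exp (1 - t) ∧ Real.exp (1 - t) < 1 := by
  refine ⟨Real.exp_pos _, ?_⟩
  have := Real.exp_lt_exp.2 (show 1 - t < 0 by linarith)
  rwa [Real.exp_zero] at this

lemma hL_low {t : ℝ} (ht : 1 < t) :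
    Real.exp (1 - t) ≤ Real.log (1 / (1 - Real.exp (1 - t))) := by
  obtain ⟨hp0, hp1⟩ := hp_mem ht
  rw [one_div, Real.log_inv]
  have := Real.log_le_sub_one_of_pos (by linarith : (0:ℝ) < 1 - Real.exp (1 - t))
  linarith

lemma hL_up2 {t : ℝ} (ht : 2 ≤ t) :
    Real.log (1 / (1 - Real.exp (1 - t))) ≤ 2 * Real.exp (1 - t) := by
  have ht1 : 1 < t := by linarith
  obtain ⟨hp0, hp1⟩ := hp_mem ht1
  set p := Real.exp (1 - t) with hp
  have hphalf : p ≤ 1/2 := by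
    have h1 : Real.exp (1 - t) ≤ Real.exp (-1) := Real.exp_le_exp.2 (by linarith)
    have h2 : (2:ℝ) ≤ Real.exp 1 := by
      have := Real.add_one_le_exp 1
      linarith
    have h3 : Real.exp (-1) = (Real.exp 1)⁻¹ := Real.exp_neg 1
    rw [h3] at h1
    have : (Real.exp 1)⁻¹ ≤ 1/2 := by
      rw [inv_le_iff_one_le_mul₀ (by positivity)]
      · linarith
    linarith
  have h4 : (0:ℝ) < 1 - p := by linarith
  have h5 := Real.log_le_sub_one_of_pos (x := 1/(1-p)) (by positivity)
  have h6 : 1/(1-p) - 1 ≤ 2 * p := by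
    rw [div_sub' (by linarith : (1:ℝ) - p ≠ 0), div_le_iff₀ h4]
    nlinarith
  linarith

lemma hL_up1 {t k : ℝ} (ht1 : 1 < t) (ht2 : t ≤ 2) (hk : 0 < k) :
    Real.log (1 / (1 - Real.exp (1 - t))) ≤ k * ((t - 1) / Real.exp 1) ^ (-(1/k)) := by
  obtain ⟨hp0, hp1⟩ := hp_mem ht1
  set p := Real.exp (1 - t) with hp
  have hu : (0:ℝ) < 1 - p := by linarith
  rw [one_div, Real.log_inv]
  have h1 := neg_log_le' hu hk
  -- 1 - p ≥ (t-1)/e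
  have hs0 : 0 < t - 1 := by linarith
  have he2 : (2:ℝ) ≤ Real.exp 1 := by
    have := Real.add_one_le_exp 1
    linarith
  have hmain : (t - 1) / Real.exp 1 ≤ 1 - p := by
    have h2 : 1 + (t - 1) ≤ Real.exp (t - 1) := by
      have := Real.add_one_le_exp (t - 1)
      linarith
    have h3 : p = (Real.exp (t - 1))⁻¹ := by
      rw [hp, ← Real.exp_neg]; ring_nf
    have h4 : (Real.exp (t-1))⁻¹ ≤ (1 + (t-1))⁻¹ := by
      apply inv_anti₀ (by linarith) h2
    have h5 : 1 - (1 + (t-1))⁻¹ = (t-1)/(1+(t-1)) := by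
      field_simp
      ring
    have h6 : (t-1)/(1+(t-1)) ≥ (t-1)/Real.exp 1 := by
      apply div_le_div_of_nonneg_left hs0.le (by linarith) (by linarith)
    rw [h3]
    linarith [h4, h6, h5.symm.le]
  have h7 : (1 - p) ^ (-(1/k)) ≤ ((t-1)/Real.exp 1) ^ (-(1/k)) :=
    Real.rpow_le_rpow_of_nonpos (by positivity) hmain (by
      rw [neg_nonpos]
      positivity)
  have h8 : 0 ≤ k := hk.le
  nlinarith


lemma lint_ofReal_ne_top {f : ℝ → ℝ} {s : Set ℝ} (hf : IntegrableOn f s) :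
    ∫⁻ x in s, ENNReal.ofReal (f x) ≠ ⊤ := by
  have h1 : ∫⁻ x in s, ENNReal.ofReal (f x) ≤ ∫⁻ x in s, ‖f x‖₊ :=
    lintegral_mono fun x => Real.ofReal_le_enorm (f x)
  exact ne_top_of_le_ne_top hf.2.ne h1

lemma lint_ofReal_eq_top {f : ℝ → ℝ} {s : Set ℝ} (hs : MeasurableSet s)
    (hm : AEMeasurable f (volume.restrict s)) (h0 : ∀ x ∈ s, 0 ≤ f x)
    (hf : ¬ IntegrableOn f s) : ∫⁻ x in s, ENNReal.ofReal (f x) = ⊤ := by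
  by_contra h
  refine hf ⟨hm.aestronglyMeasurable, ?_⟩
  rw [hasFiniteIntegral_iff_ofReal ((ae_restrict_iff' hs).2 (ae_of_all _ h0))]
  exact lt_top_iff_ne_top.2 h

lemma bound_ne_top {F : ℝ → ENNReal} {b : ℝ → ℝ} {s : Set ℝ} (hb : Measurable b)
    (h : ∀ x ∈ s, F x ≤ ENNReal.ofReal (b x)) (hi : IntegrableOn b s) :
    ∫⁻ x in s, F x ≠ ⊤ :=
  ne_top_of_le_ne_top (lint_ofReal_ne_top hi) (setLIntegral_mono hb.ennreal_ofReal h)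

lemma bound_eq_top {F : ℝ → ENNReal} {b : ℝ → ℝ} {s : Set ℝ} (hs : MeasurableSet s)
    (hm : Measurable b) (h0 : ∀ x ∈ s, 0 ≤ b x)
    (h : ∀ x ∈ s, ENNReal.ofReal (b x) ≤ F x) (hi : ¬ IntegrableOn b s) :
    ∫⁻ x in s, F x = ⊤ := by
  refine top_unique ?_
  rw [← lint_ofReal_eq_top hs hm.aemeasurable h0 hi]
  exact setLIntegral_mono' hs h

lemma neg_log_le {u k : ℝ} (hu : 0 < u) (hk : 0 < k) :
    -Real.log u ≤ k * u ^ (-(1/k)) := by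
  have h1 := Real.log_le_sub_one_of_pos (Real.rpow_pos_of_pos hu (-(1/k)))
  rw [Real.log_rpow hu] at h1
  have h2 := mul_le_mul_of_nonneg_left h1 hk.le
  have hk' : k * (-(1/k) * Real.log u) = -Real.log u := by field_simp
  have h3 : 0 < u ^ (-(1/k)) := Real.rpow_pos_of_pos hu _
  nlinarith


lemma lintegral_image_1d {s : Set ℝ} {f f' : ℝ → ℝ} (hs : MeasurableSet s)
    (hf' : ∀ x ∈ s, HasDerivWithinAt f (f' x) s x) (hf : InjOn f s) (g : ℝ → ENNReal) :
    ∫⁻ x in f '' s, g x = ∫⁻ x in s, ENNReal.ofReal |f' x| * g (f x) := by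
  simpa only [ContinuousLinearMap.det_toSpanSingleton] using
    MeasureTheory.lintegral_image_eq_lintegral_abs_det_fderiv_mul volume hs
      (fun x hx => (hf' x hx).hasFDerivWithinAt) hf g

lemma image_exp (s : ℝ) :
    (fun t : ℝ => Real.exp (1 - t)) '' Ioi s = Ioo 0 (Real.exp (1 - s)) := by
  ext p
  constructor
  · rintro ⟨t, ht, rfl⟩
    exact ⟨Real.exp_pos _, Real.exp_lt_exp.2 (by simpa using ht)⟩
  · rintro ⟨hp0, hp1⟩
    have h2 := (Real.log_lt_log_iff hp0 (Real.exp_pos _)).2 hp1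
    rw [Real.log_exp] at h2
    exact ⟨1 - Real.log p, by simp only [mem_Ioi]; linarith,
      by simp [sub_sub_cancel, Real.exp_log hp0]⟩

lemma subst (g : ℝ → ENNReal) (s : ℝ) :
    ∫⁻ p in Ioo (0:ℝ) (Real.exp (1 - s)), g p
      = ∫⁻ t in Ioi s, ENNReal.ofReal (Real.exp (1 - t)) * g (Real.exp (1 - t)) := by
  rw [← image_exp s,
    lintegral_image_1d measurableSet_Ioi
      (f' := fun t => -Real.exp (1 - t))
      (fun x _ => by
        simpa using (((hasDerivAt_id x).const_sub 1).exp.hasDerivWithinAt (s := Ioi s)))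
      (fun a _ b _ hab => by
        have := Real.exp_injective hab
        linarith) g]
  refine lintegral_congr fun t => ?_
  rw [abs_neg, abs_of_pos (Real.exp_pos _)]

lemma measurable_density (γ : ℝ) :
    Measurable (fun p : ℝ => ENNReal.ofReal ((1 + Real.log (1 / p)) ^ (-γ))) := by
  refine Measurable.ennreal_ofReal ?_
  exact (measurable_const.add ((Real.measurable_log).comp
    (measurable_const.div measurable_id))).pow_const (-γ)

lemma reduce (γ : ℝ) {r : ℝ} (hr0 : 0 < r) (hr1 : r ≤ 1) {g : ℝ → ENNReal}
    (hg : Measurable g) :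
    ∫⁻ p in Icc 0 r, g p ∂(LambdaGamma γ)
      = ∫⁻ t in Ioi (1 - Real.log r), ENNReal.ofReal (Real.exp (1 - t)) *
          (ENNReal.ofReal (t ^ (-γ)) * g (Real.exp (1 - t))) := by
  rw [LambdaGamma, setLIntegral_withDensity_eq_setLIntegral_mul _ (measurable_density γ) hg
    measurableSet_Icc, Measure.restrict_restrict measurableSet_Icc,
    inter_eq_self_of_subset_left (Icc_subset_Icc_right hr1),
    setLIntegral_congr (Ioo_ae_eq_Icc (μ := volume) (a := (0:ℝ)) (b := r)).symm]
  have him : Ioo (0:ℝ) r = Ioo 0 (Real.exp (1 - (1 - Real.log r))) := by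
    norm_num [Real.exp_log hr0]
  rw [him, subst]
  refine lintegral_congr fun t => ?_
  simp only [Pi.mul_apply]
  rw [one_div, ← Real.exp_neg, Real.log_exp, neg_sub]
  norm_num

lemma measurable_gb : Measurable fun p : ℝ => ENNReal.ofReal (Real.log (1/p) / p) :=
  (((Real.measurable_log).comp (measurable_const.div measurable_id)).div
    measurable_id).ennreal_ofReal

lemma partB (γ : ℝ) :
    (∫⁻ p in Icc (0:ℝ) 1,
        ENNReal.ofReal (Real.log (1 / p) / p) ∂(LambdaGamma γ)) ≠ ⊤ ↔ 2 < γ := by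
  rw [reduce γ one_pos le_rfl measurable_gb, Real.log_one, sub_zero]
  have hcong : ∀ᵐ t ∂(volume : Measure ℝ), t ∈ Ioi (1:ℝ) →
      ENNReal.ofReal (Real.exp (1 - t)) * (ENNReal.ofReal (t ^ (-γ)) *
        ENNReal.ofReal (Real.log (1 / Real.exp (1 - t)) / Real.exp (1 - t)))
      = ENNReal.ofReal ((t - 1) * t ^ (-γ)) := by
    refine ae_of_all _ fun t ht => ?_
    have ht0 : (0:ℝ) < t := lt_trans one_pos ht
    rw [one_div, ← Real.exp_neg, Real.log_exp, neg_sub,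
      ← ENNReal.ofReal_mul (Real.rpow_nonneg ht0.le _),
      ← ENNReal.ofReal_mul (Real.exp_pos _).le]
    congr 1
    field_simp
  rw [setLIntegral_congr_fun_ae measurableSet_Ioi hcong]
  constructor
  · intro h
    by_contra hγ
    push_neg at hγ
    refine h (top_unique ?_)
    calc (⊤ : ENNReal) = ∫⁻ t in Ioi (2:ℝ), ENNReal.ofReal ((t - 1) * t ^ (-γ)) := by
          symm
          refine bound_eq_top (b := fun t => t ^ (1 - γ) / 2) measurableSet_Ioi
            ((measurable_id.pow_const (1 - γ)).div_const 2)
            (fun t ht => by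
              have h0 : (0:ℝ) < t := lt_trans two_pos ht
              positivity) (fun t ht => ?_) (fun H => ?_)
          · have ht0 : (0:ℝ) < t := lt_trans two_pos ht
            refine ENNReal.ofReal_le_ofReal ?_
            have h1 : t ^ (1 - γ) = t * t ^ (-γ) := by
              rw [show (1 - γ) = 1 + (-γ) by ring, Real.rpow_add ht0, Real.rpow_one]
            have h2 : (0:ℝ) ≤ t ^ (-γ) := Real.rpow_nonneg ht0.le _
            show t ^ (1 - γ) / 2 ≤ (t - 1) * t ^ (-γ)
            rw [h1]
            nlinarith [mem_Ioi.1 ht]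
          · have H2 := H.const_mul 2
            have heq : (fun t : ℝ => 2 * (t ^ (1 - γ) / 2)) = fun t : ℝ => t ^ (1 - γ) := by
              funext t; ring
            rw [heq] at H2
            have := (integrableOn_Ioi_rpow_iff two_pos).1 H2
            linarith
      _ ≤ _ := lintegral_mono_set (Ioi_subset_Ioi one_le_two)
  · intro hγ
    refine bound_ne_top (b := fun t => t ^ (1 - γ)) (measurable_id.pow_const (1 - γ))
      (fun t ht => ?_) (integrableOn_Ioi_rpow_of_lt (by linarith) one_pos)
    have ht0 : (0:ℝ) < t := lt_trans one_pos ht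
    refine ENNReal.ofReal_le_ofReal ?_
    have h1 : t ^ (1 - γ) = t * t ^ (-γ) := by
      rw [show (1 - γ) = 1 + (-γ) by ring, Real.rpow_add ht0, Real.rpow_one]
    have h2 : (0:ℝ) ≤ t ^ (-γ) := Real.rpow_nonneg ht0.le _
    show (t - 1) * t ^ (-γ) ≤ t ^ (1 - γ)
    rw [h1]
    nlinarith [mem_Ioi.1 ht]

lemma combine {γ t : ℝ} (ht : 1 < t) (c : ℝ) :
    ENNReal.ofReal (Real.exp (1 - t)) * (ENNReal.ofReal (t ^ (-γ)) *
      ENNReal.ofReal (c / Real.exp (1 - t) ^ 2))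
      = ENNReal.ofReal (t ^ (-γ) * (c * Real.exp (t - 1))) := by
  have ht0 : (0:ℝ) < t := lt_trans one_pos ht
  rw [← ENNReal.ofReal_mul (Real.rpow_nonneg ht0.le _),
    ← ENNReal.ofReal_mul (Real.exp_pos _).le]
  congr 1
  have hE2 : Real.exp (t - 1) = (Real.exp (1 - t))⁻¹ := by
    rw [← Real.exp_neg]; ring_nf
  rw [hE2]
  have := Real.exp_ne_zero (1 - t)
  field_simp

lemma split_ne_top {F : ℝ → ENNReal} (h1 : ∫⁻ x in Ioo (1:ℝ) 2, F x ≠ ⊤)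
    (h2 : ∫⁻ x in Ici (2:ℝ), F x ≠ ⊤) : ∫⁻ x in Ioi (1:ℝ), F x ≠ ⊤ := by
  have hsub : Ioi (1:ℝ) ⊆ Ioo 1 2 ∪ Ici 2 := by
    intro x hx
    rcases lt_or_ge x 2 with h | h
    · exact Or.inl ⟨hx, h⟩
    · exact Or.inr h
  exact ne_top_of_le_ne_top (ENNReal.add_ne_top.2 ⟨h1, h2⟩)
    (le_trans (lintegral_mono_set hsub) (lintegral_union_le _ _ _))

lemma integrable_half : IntegrableOn (fun t : ℝ => (t - 1) ^ (-(1/2) : ℝ)) (Ioo (1:ℝ) 2) := by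
  have i1 : IntervalIntegrable (fun x : ℝ => x ^ (-(1/2):ℝ)) volume 0 1 :=
    intervalIntegral.intervalIntegrable_rpow' (by norm_num)
  have i2 := i1.comp_sub_right 1
  have i3 : IntervalIntegrable (fun x : ℝ => (x - 1) ^ (-(1/2):ℝ)) volume 1 2 := by
    convert i2 using 2 <;> norm_num
  exact ((intervalIntegrable_iff_integrableOn_Ioc_of_le (by norm_num)).1 i3).mono_set
    Ioo_subset_Ioc_self

lemma div_exp_rpow {t : ℝ} (ht : 1 < t) :
    ((t - 1) / Real.exp 1) ^ (-(1/2):ℝ)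
      = Real.exp 1 ^ ((1/2):ℝ) * (t - 1) ^ (-(1/2):ℝ) := by
  rw [Real.div_rpow (by linarith) (Real.exp_pos 1).le, Real.rpow_neg (Real.exp_pos 1).le,
    div_eq_mul_inv, inv_inv, mul_comm]

lemma exp_one_mul_exp_neg (t : ℝ) : Real.exp (1 - t) * Real.exp (t - 1) = 1 := by
  rw [← Real.exp_add]; norm_num

lemma partA (γ : ℝ) :
    ((∫⁻ p in Icc (0:ℝ) 1,
        ENNReal.ofReal (Real.log (1 / (1 - p)) / p ^ 2) ∂(LambdaGamma γ)) ≠ ⊤ ∧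
      (∫⁻ p in Icc (0:ℝ) 1,
        ENNReal.ofReal ((Real.log (1 / (1 - p))) ^ 2 / p ^ 2) ∂(LambdaGamma γ)) ≠ ⊤) ↔
      1 < γ := by
  have hmlog : Measurable fun p : ℝ => Real.log (1 / (1 - p)) :=
    Real.measurable_log.comp (measurable_const.div (measurable_const.sub measurable_id))
  have hm1 : Measurable fun p : ℝ => ENNReal.ofReal (Real.log (1 / (1 - p)) / p ^ 2) :=
    (hmlog.div (measurable_id.pow_const 2)).ennreal_ofReal
  have hm2 : Measurable fun p : ℝ => ENNReal.ofReal ((Real.log (1 / (1 - p))) ^ 2 / p ^ 2) :=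
    ((hmlog.pow_const 2).div (measurable_id.pow_const 2)).ennreal_ofReal
  rw [reduce γ one_pos le_rfl hm1, reduce γ one_pos le_rfl hm2, Real.log_one, sub_zero,
    setLIntegral_congr_fun_ae measurableSet_Ioi (ae_of_all _ fun t (ht : t ∈ Ioi (1:ℝ)) =>
      combine ht (Real.log (1 / (1 - Real.exp (1 - t))))),
    setLIntegral_congr_fun_ae measurableSet_Ioi (ae_of_all _ fun t (ht : t ∈ Ioi (1:ℝ)) =>
      combine ht ((Real.log (1 / (1 - Real.exp (1 - t)))) ^ 2))]
  constructor
  · rintro ⟨h1, -⟩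
    by_contra hγ
    push_neg at hγ
    refine h1 (top_unique ?_)
    have htop : ∫⁻ t in Ioi (2:ℝ), ENNReal.ofReal (t ^ (-γ) *
        (Real.log (1 / (1 - Real.exp (1 - t))) * Real.exp (t - 1))) = ⊤ := by
      refine bound_eq_top (b := fun t => t ^ (-γ)) measurableSet_Ioi
        (measurable_id.pow_const _) (fun t ht => Real.rpow_nonneg (by
          have := mem_Ioi.1 ht; linarith) _) (fun t ht => ?_) (fun H => by
          have := (integrableOn_Ioi_rpow_iff two_pos).1 H
          linarith)
      have ht1 : (1:ℝ) < t := by have := mem_Ioi.1 ht; linarith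
      refine ENNReal.ofReal_le_ofReal ?_
      have hL := hL_low ht1
      have hX := Real.exp_pos (t - 1)
      have hE := exp_one_mul_exp_neg t
      have hA : (0:ℝ) ≤ t ^ (-γ) := Real.rpow_nonneg (by linarith) _
      nlinarith [mul_le_mul_of_nonneg_right hL hX.le]
    calc (⊤ : ENNReal) = _ := htop.symm
      _ ≤ _ := lintegral_mono_set (Ioi_subset_Ioi one_le_two)
  · intro hγ
    have hA1 : ∀ t : ℝ, 1 ≤ t → t ^ (-γ) ≤ 1 := fun t ht =>
      Real.rpow_le_one_of_one_le_of_nonpos ht (by linarith)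
    constructor
    · -- μ finite
      refine split_ne_top ?_ ?_
      · refine bound_ne_top
          (b := fun t => 2 * Real.exp 1 ^ ((1/2):ℝ) * Real.exp 1 * (t - 1) ^ (-(1/2) : ℝ))
          ((measurable_id.sub_const 1).pow_const _ |>.const_mul _)
          (fun t ht => ?_) (integrable_half.const_mul _)
        obtain ⟨ht1, ht2⟩ := ht
        refine ENNReal.ofReal_le_ofReal ?_
        set L := Real.log (1 / (1 - Real.exp (1 - t))) with hLdef
        have hL : L ≤ 2 * ((t - 1) / Real.exp 1) ^ (-(1/2):ℝ) :=
          hL_up1 ht1 ht2.le two_pos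
        rw [div_exp_rpow ht1] at hL
        have hX : Real.exp (t - 1) ≤ Real.exp 1 := Real.exp_le_exp.2 (by linarith)
        have hL0 : 0 ≤ L := le_trans (Real.exp_pos _).le (hL_low ht1)
        have hA := hA1 t ht1.le
        have hAnn : (0:ℝ) ≤ t ^ (-γ) := Real.rpow_nonneg (by linarith) _
        have hw : (0:ℝ) ≤ (t - 1) ^ (-(1/2):ℝ) := Real.rpow_nonneg (by linarith) _
        calc t ^ (-γ) * (L * Real.exp (t - 1))
            ≤ 1 * ((2 * (Real.exp 1 ^ ((1/2):ℝ) * (t - 1) ^ (-(1/2):ℝ))) * Real.exp 1) := by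
              refine mul_le_mul hA (mul_le_mul ?_ hX (Real.exp_pos _).le (by positivity))
                (by positivity) zero_le_one
              linarith
          _ = 2 * Real.exp 1 ^ ((1/2):ℝ) * Real.exp 1 * (t - 1) ^ (-(1/2) : ℝ) := by ring
      · refine bound_ne_top (b := fun t => 2 * t ^ (-γ))
          ((measurable_id.pow_const _).const_mul 2) (fun t ht => ?_)
          ((integrableOn_Ici_iff_integrableOn_Ioi).2
            ((integrableOn_Ioi_rpow_of_lt (by linarith) two_pos).const_mul 2))
        have ht2 : (2:ℝ) ≤ t := ht
        have ht1 : (1:ℝ) < t := by linarith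
        refine ENNReal.ofReal_le_ofReal ?_
        have hL := hL_up2 ht2
        have hL0 : 0 ≤ Real.log (1 / (1 - Real.exp (1 - t))) :=
          le_trans (Real.exp_pos _).le (hL_low ht1)
        have hE := exp_one_mul_exp_neg t
        have hX := Real.exp_pos (t - 1)
        have hAnn : (0:ℝ) ≤ t ^ (-γ) := Real.rpow_nonneg (by linarith) _
        nlinarith [mul_le_mul_of_nonneg_right hL hX.le]
    · -- σ² finite
      refine split_ne_top ?_ ?_
      · refine bound_ne_top
          (b := fun t => 16 * Real.exp 1 ^ ((1/2):ℝ) * Real.exp 1 * (t - 1) ^ (-(1/2) : ℝ))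
          ((measurable_id.sub_const 1).pow_const _ |>.const_mul _)
          (fun t ht => ?_) (integrable_half.const_mul _)
        obtain ⟨ht1, ht2⟩ := ht
        refine ENNReal.ofReal_le_ofReal ?_
        set L := Real.log (1 / (1 - Real.exp (1 - t))) with hLdef
        set x := (t - 1) / Real.exp 1 with hxdef
        have hx : (0:ℝ) < x := by
          have : (0:ℝ) < t - 1 := by linarith
          positivity
        have hL : L ≤ 4 * x ^ (-(1/4):ℝ) :=
          hL_up1 ht1 ht2.le (by norm_num : (0:ℝ) < 4)
        have hsq : x ^ (-(1/4):ℝ) * x ^ (-(1/4):ℝ) = x ^ (-(1/2):ℝ) := by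
          rw [← Real.rpow_add hx]; norm_num
        have hX : Real.exp (t - 1) ≤ Real.exp 1 := Real.exp_le_exp.2 (by linarith)
        have hL0 : 0 ≤ L := le_trans (Real.exp_pos _).le (hL_low ht1)
        have hA := hA1 t ht1.le
        have hAnn : (0:ℝ) ≤ t ^ (-γ) := Real.rpow_nonneg (by linarith) _
        have hkey : x ^ (-(1/4):ℝ) * x ^ (-(1/4):ℝ)
            = Real.exp 1 ^ ((1/2):ℝ) * (t - 1) ^ (-(1/2):ℝ) := by
          rw [hsq, hxdef, div_exp_rpow ht1]
        calc t ^ (-γ) * (L ^ 2 * Real.exp (t - 1))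
            ≤ 1 * (((4 * x ^ (-(1/4):ℝ)) * (4 * x ^ (-(1/4):ℝ))) * Real.exp 1) := by
              rw [pow_two]
              refine mul_le_mul hA (mul_le_mul (mul_le_mul hL hL hL0 (by positivity)) hX
                (Real.exp_pos _).le (by positivity)) (by positivity) zero_le_one
          _ = 16 * Real.exp 1 * (x ^ (-(1/4):ℝ) * x ^ (-(1/4):ℝ)) := by ring
          _ = 16 * Real.exp 1 * (Real.exp 1 ^ ((1/2):ℝ) * (t - 1) ^ (-(1/2):ℝ)) := by
              rw [hkey]
          _ = 16 * Real.exp 1 ^ ((1/2):ℝ) * Real.exp 1 * (t - 1) ^ (-(1/2) : ℝ) := by ring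
      · refine bound_ne_top (b := fun t => 4 * Real.exp 1 * Real.exp (-t))
          (((measurable_id.neg).exp).const_mul _) (fun t ht => ?_)
          ((integrableOn_Ici_iff_integrableOn_Ioi).2 ?_)
        · have ht2 : (2:ℝ) ≤ t := ht
          have ht1 : (1:ℝ) < t := by linarith
          refine ENNReal.ofReal_le_ofReal ?_
          set L := Real.log (1 / (1 - Real.exp (1 - t))) with hLdef
          have hL := hL_up2 ht2
          have hL0 : 0 ≤ L := le_trans (Real.exp_pos _).le (hL_low ht1)
          have hp := Real.exp_pos (1 - t)
          have hX := Real.exp_pos (t - 1)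
          have hA := hA1 t ht1.le
          have hAnn : (0:ℝ) ≤ t ^ (-γ) := Real.rpow_nonneg (by linarith) _
          have hppX : Real.exp (1 - t) * Real.exp (1 - t) * Real.exp (t - 1)
              = Real.exp 1 * Real.exp (-t) := by
            rw [← Real.exp_add, ← Real.exp_add, ← Real.exp_add]
            ring_nf
          calc t ^ (-γ) * (L ^ 2 * Real.exp (t - 1))
              ≤ 1 * (((2 * Real.exp (1 - t)) * (2 * Real.exp (1 - t))) * Real.exp (t - 1)) := by
                rw [pow_two]
                refine mul_le_mul hA (mul_le_mul (mul_le_mul hL hL hL0 (by positivity)) le_rfl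
                  hX.le (by positivity)) (by positivity) zero_le_one
            _ = 4 * (Real.exp (1 - t) * Real.exp (1 - t) * Real.exp (t - 1)) := by ring
            _ = 4 * (Real.exp 1 * Real.exp (-t)) := by rw [hppX]
            _ = 4 * Real.exp 1 * Real.exp (-t) := by ring
        · have := exp_neg_integrableOn_Ioi 2 (one_pos)
          simp only [neg_mul, one_mul] at this
          exact this.const_mul _

lemma innerI (γ : ℝ) {r : ℝ} (hr0 : 0 < r) (hr1 : r ≤ 1) :
    ∫⁻ p in Icc (0:ℝ) r, (ENNReal.ofReal p)⁻¹ ∂(LambdaGamma γ)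
      = ∫⁻ t in Ioi (1 - Real.log r), ENNReal.ofReal (t ^ (-γ)) := by
  rw [reduce γ hr0 hr1 (g := fun p : ℝ => (ENNReal.ofReal p)⁻¹) (ENNReal.measurable_ofReal.inv)]
  refine setLIntegral_congr_fun_ae measurableSet_Ioi (ae_of_all _ fun t _ => ?_)
  have h1 : ENNReal.ofReal (Real.exp (1 - t)) ≠ 0 :=
    (ENNReal.ofReal_pos.2 (Real.exp_pos _)).ne'
  rw [mul_left_comm, ENNReal.mul_inv_cancel h1 ENNReal.ofReal_ne_top, mul_one]

lemma J_fin {γ s : ℝ} (hγ : 1 < γ) (hs : 0 < s) :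
    ∫⁻ t in Ioi s, ENNReal.ofReal (t ^ (-γ)) = ENNReal.ofReal (s ^ (1 - γ) / (γ - 1)) := by
  have hint : IntegrableOn (fun t : ℝ => t ^ (-γ)) (Ioi s) :=
    integrableOn_Ioi_rpow_of_lt (by linarith) hs
  rw [← ofReal_integral_eq_lintegral_ofReal hint ((ae_restrict_iff' measurableSet_Ioi).2
    (ae_of_all _ fun t ht => Real.rpow_nonneg (le_of_lt (hs.trans ht)) _)),
    integral_Ioi_rpow_of_lt (by linarith) hs]
  congr 1
  rw [show -γ + 1 = 1 - γ by ring]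
  have h1 : γ - 1 ≠ 0 := by linarith
  have h2 : (1:ℝ) - γ ≠ 0 := by linarith
  field_simp
  ring

lemma J_top {γ s : ℝ} (hγ : γ ≤ 1) (hs : 0 < s) :
    ∫⁻ t in Ioi s, ENNReal.ofReal (t ^ (-γ)) = ⊤ :=
  lint_ofReal_eq_top measurableSet_Ioi (measurable_id.pow_const _).aemeasurable
    (fun t ht => Real.rpow_nonneg (le_of_lt (hs.trans ht)) _)
    (fun H => by
      have := (integrableOn_Ioi_rpow_iff hs).1 H
      linarith)

lemma partC (γ : ℝ) :
    Tendsto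
        (fun r : ℝ =>
          ENNReal.ofReal (Real.sqrt (Real.log (1 / r))) *
            ∫⁻ p in Icc (0 : ℝ) r, (ENNReal.ofReal p)⁻¹ ∂(LambdaGamma γ))
        (nhdsWithin 0 (Ioi 0)) (nhds 0) ↔ 3 / 2 < γ := by
  have hev : Ioo (0:ℝ) 1 ∈ nhdsWithin (0:ℝ) (Ioi 0) :=
    Ioo_mem_nhdsGT_of_mem ⟨le_refl 0, one_pos⟩
  constructor
  · intro hT
    by_contra hγ
    push_neg at hγ
    rcases le_or_gt γ 1 with h1 | h1
    · -- the inner integral is infinite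
      have hev2 : ∀ᶠ r in nhdsWithin (0:ℝ) (Ioi 0),
          ENNReal.ofReal (Real.sqrt (Real.log (1 / r))) *
            (∫⁻ p in Icc (0 : ℝ) r, (ENNReal.ofReal p)⁻¹ ∂(LambdaGamma γ)) = ⊤ := by
        filter_upwards [hev] with r hr
        rw [innerI γ hr.1 hr.2.le, J_top h1 (by
          have := Real.log_neg hr.1 hr.2
          linarith)]
        refine ENNReal.mul_top ?_
        have hlog : 0 < Real.log (1 / r) := Real.log_pos (one_lt_one_div hr.1 hr.2)
        exact (ENNReal.ofReal_pos.2 (Real.sqrt_pos.2 hlog)).ne'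
      have hlt := hT.eventually_lt_const (show (0:ℝ≥0∞) < 1 by norm_num)
      obtain ⟨r, htop, hlt1⟩ := (hev2.and hlt).exists
      rw [htop] at hlt1
      simp at hlt1
    · -- 1 < γ ≤ 3/2 : eventually bounded below
      set c : ℝ := 1 / (Real.sqrt 2 * (γ - 1)) with hc
      have hsqrt2 : (0:ℝ) < Real.sqrt 2 := Real.sqrt_pos.2 two_pos
      have hcpos : 0 < c := div_pos one_pos (mul_pos hsqrt2 (by linarith))
      have hev3 : ∀ᶠ r in nhdsWithin (0:ℝ) (Ioi 0),
          ENNReal.ofReal c ≤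
            ENNReal.ofReal (Real.sqrt (Real.log (1 / r))) *
              (∫⁻ p in Icc (0 : ℝ) r, (ENNReal.ofReal p)⁻¹ ∂(LambdaGamma γ)) := by
        have hev' : Ioo (0:ℝ) (Real.exp (-1)) ∈ nhdsWithin (0:ℝ) (Ioi 0) :=
          Ioo_mem_nhdsGT_of_mem ⟨le_refl 0, Real.exp_pos _⟩
        filter_upwards [hev'] with r hr
        have hr1 : r < 1 := by
          have : Real.exp (-1) < 1 := by
            have := Real.exp_lt_exp.2 (show (-1:ℝ) < 0 by norm_num)
            rwa [Real.exp_zero] at this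
          linarith [hr.2]
        have hlogr : Real.log r < -1 := by
          have := Real.log_lt_log hr.1 hr.2
          rwa [Real.log_exp] at this
        set s : ℝ := 1 - Real.log r with hs
        have hs2 : 2 < s := by simp only [hs]; linarith
        have hsp : (0:ℝ) < s := by linarith
        have hs1 : (1:ℝ) ≤ s := by linarith
        rw [innerI γ hr.1 hr1.le, J_fin h1 hsp, ← ENNReal.ofReal_mul (Real.sqrt_nonneg _)]
        refine ENNReal.ofReal_le_ofReal ?_
        have e1 : Real.log (1 / r) = s - 1 := by
          rw [one_div, Real.log_inv]; simp only [hs]; ring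
        have e2 : Real.sqrt s / Real.sqrt 2 ≤ Real.sqrt (s - 1) := by
          rw [← Real.sqrt_div hsp.le]
          exact Real.sqrt_le_sqrt (by linarith)
        have e3 : Real.sqrt s = s ^ ((1:ℝ)/2) := Real.sqrt_eq_rpow s
        have e4 : s ^ ((1:ℝ)/2) * s ^ (1 - γ) = s ^ (3/2 - γ) := by
          rw [← Real.rpow_add hsp]; congr 1; ring
        have e5 : (1:ℝ) ≤ s ^ (3/2 - γ) := by
          have := Real.rpow_le_rpow_of_exponent_le hs1 (show (0:ℝ) ≤ 3/2 - γ by linarith)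
          rwa [Real.rpow_zero] at this
        have hrpnn : (0:ℝ) ≤ s ^ (1 - γ) := Real.rpow_nonneg hsp.le _
        rw [e1]
        calc c = 1 / (Real.sqrt 2 * (γ - 1)) := rfl
          _ ≤ s ^ (3/2 - γ) / (Real.sqrt 2 * (γ - 1)) := by
              have hD : (0:ℝ) < Real.sqrt 2 * (γ - 1) := mul_pos hsqrt2 (by linarith)
              gcongr
          _ = (s ^ ((1:ℝ)/2) * s ^ (1 - γ)) / (Real.sqrt 2 * (γ - 1)) := by rw [e4]
          _ = (s ^ ((1:ℝ)/2) / Real.sqrt 2) * (s ^ (1 - γ) / (γ - 1)) :=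
              (div_mul_div_comm _ _ _ _).symm
          _ = (Real.sqrt s / Real.sqrt 2) * (s ^ (1 - γ) / (γ - 1)) := by rw [e3]
          _ ≤ Real.sqrt (s - 1) * (s ^ (1 - γ) / (γ - 1)) :=
              mul_le_mul_of_nonneg_right e2 (div_nonneg hrpnn (by linarith))
      have hlt := hT.eventually_lt_const (ENNReal.ofReal_pos.2 hcpos)
      obtain ⟨r, hge, hlt1⟩ := (hev3.and hlt).exists
      exact absurd (lt_of_le_of_lt hge hlt1) (lt_irrefl _)
  · intro hγ
    have h1 : 1 < γ := by linarith
    have heq : ∀ᶠ r in nhdsWithin (0:ℝ) (Ioi 0),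
        ENNReal.ofReal (Real.sqrt (Real.log (1 / r))) *
            (∫⁻ p in Icc (0 : ℝ) r, (ENNReal.ofReal p)⁻¹ ∂(LambdaGamma γ))
          = ENNReal.ofReal
              (Real.sqrt (Real.log (1 / r)) * ((1 - Real.log r) ^ (1 - γ) / (γ - 1))) := by
      filter_upwards [hev] with r hr
      have hsp : (0:ℝ) < 1 - Real.log r := by
        have := Real.log_neg hr.1 hr.2
        linarith
      rw [innerI γ hr.1 hr.2.le, J_fin h1 hsp,
        ← ENNReal.ofReal_mul (Real.sqrt_nonneg _)]
    refine Tendsto.congr' (Filter.EventuallyEq.symm heq) ?_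
    have hreal : Tendsto
        (fun r : ℝ => Real.sqrt (Real.log (1 / r)) * ((1 - Real.log r) ^ (1 - γ) / (γ - 1)))
        (nhdsWithin 0 (Ioi 0)) (nhds 0) := by
      have hstend : Tendsto (fun r : ℝ => 1 - Real.log r) (nhdsWithin (0:ℝ) (Ioi 0)) atTop := by
        have h2 := tendsto_neg_atBot_atTop.comp Real.tendsto_log_nhdsGT_zero
        have h3 := tendsto_atTop_add_const_left _ 1 h2
        refine h3.congr fun r => ?_
        simp [Function.comp, sub_eq_add_neg]
      have houter : Tendsto (fun s : ℝ => s ^ (3/2 - γ) / (γ - 1)) atTop (nhds 0) := by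
        have h4 : Tendsto (fun s : ℝ => s ^ (-(γ - 3/2))) atTop (nhds 0) :=
          tendsto_rpow_neg_atTop (by linarith)
        have h5 := h4.div_const (γ - 1)
        rw [zero_div] at h5
        refine h5.congr fun s => ?_
        rw [show -(γ - 3/2) = 3/2 - γ by ring]
      have hg : Tendsto
          (fun r : ℝ => (1 - Real.log r) ^ (3/2 - γ) / (γ - 1))
          (nhdsWithin (0:ℝ) (Ioi 0)) (nhds 0) := houter.comp hstend
      refine tendsto_of_tendsto_of_tendsto_of_le_of_le' tendsto_const_nhds hg ?_ ?_
      · filter_upwards [hev] with r hr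
        have hsp : (0:ℝ) < 1 - Real.log r := by
          have := Real.log_neg hr.1 hr.2
          linarith
        exact mul_nonneg (Real.sqrt_nonneg _)
          (div_nonneg (Real.rpow_nonneg hsp.le _) (by linarith))
      · filter_upwards [hev] with r hr
        have hlneg := Real.log_neg hr.1 hr.2
        set s : ℝ := 1 - Real.log r with hs
        have hsp : (0:ℝ) < s := by linarith
        have e1 : Real.log (1 / r) = s - 1 := by
          rw [one_div, Real.log_inv]; simp only [hs]; ring
        have e2 : Real.sqrt (s - 1) ≤ Real.sqrt s := Real.sqrt_le_sqrt (by linarith)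
        have e3 : Real.sqrt s = s ^ ((1:ℝ)/2) := Real.sqrt_eq_rpow s
        have e4 : s ^ ((1:ℝ)/2) * s ^ (1 - γ) = s ^ (3/2 - γ) := by
          rw [← Real.rpow_add hsp]; congr 1; ring
        have hrpnn : (0:ℝ) ≤ s ^ (1 - γ) := Real.rpow_nonneg hsp.le _
        rw [e1]
        calc Real.sqrt (s - 1) * (s ^ (1 - γ) / (γ - 1))
            ≤ Real.sqrt s * (s ^ (1 - γ) / (γ - 1)) :=
              mul_le_mul_of_nonneg_right e2 (div_nonneg hrpnn (by linarith))
          _ = (s ^ ((1:ℝ)/2) * s ^ (1 - γ)) / (γ - 1) := by rw [e3]; ring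
          _ = s ^ (3/2 - γ) / (γ - 1) := by rw [e4]
    have := ENNReal.tendsto_ofReal hreal
    rwa [ENNReal.ofReal_zero] at this

end LG

/-- For the family `Λ_γ(dp) = (1 + log(1/p))^{-γ} dp` on `[0,1]`:
(a) `μ_γ := ∫ log(1/(1-p)) p⁻² Λ_γ(dp) < ∞` and
`σ²_γ := ∫ (log(1/(1-p)))² p⁻² Λ_γ(dp) < ∞` iff `γ > 1`;
(b) `∫ log(1/p) p⁻¹ Λ_γ(dp) < ∞` iff `γ > 2`;
(c) `√(log(1/r)) ∫_{[0,r]} p⁻¹ Λ_γ(dp) → 0` as `r → 0` iff `γ > 3/2`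
(stated in `ℝ≥0∞` so that an infinite dust integral is faithfully recorded). -/
theorem lambdaGamma_example (γ : ℝ) :
    (((∫⁻ p in Icc (0 : ℝ) 1,
          ENNReal.ofReal (Real.log (1 / (1 - p)) / p ^ 2) ∂(LambdaGamma γ)) ≠ ⊤ ∧
        (∫⁻ p in Icc (0 : ℝ) 1,
          ENNReal.ofReal ((Real.log (1 / (1 - p))) ^ 2 / p ^ 2) ∂(LambdaGamma γ)) ≠ ⊤) ↔
      1 < γ) ∧
    ((∫⁻ p in Icc (0 : ℝ) 1,
        ENNReal.ofReal (Real.log (1 / p) / p) ∂(LambdaGamma γ)) ≠ ⊤ ↔ 2 < γ) ∧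
    (Tendsto
        (fun r : ℝ =>
          ENNReal.ofReal (Real.sqrt (Real.log (1 / r))) *
            ∫⁻ p in Icc (0 : ℝ) r, (ENNReal.ofReal p)⁻¹ ∂(LambdaGamma γ))
        (nhdsWithin 0 (Ioi 0)) (nhds 0) ↔ 3 / 2 < γ) := by
  exact ⟨LG.partA γ, LG.partB γ, LG.partC γ⟩
end
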